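/- Trace AM–GM inequality for products of positive-definite matrices (the key inequality in the proofs of Theorems 2 and 3): if B and C are d × d real symmetric positive-definite matrices with d ≥ 1, then Matrix.trace (B * C) ≥ d * (Matrix.det B * Matrix.det C) ^ ((1 : ℝ)/d). (The eigenvalues of B*C are real and positive, so their arithmetic mean dominates their geometric mean, which equals (det B · det C)^{1/d}.) -/

import Mathlib

open Matrix

lemma trace_eq_sum_eigenvalues' {d : ℕ} {A : Matrix (Fin d) (Fin d) ℝ}
    (hA : A.IsHermitian) : Matrix.trace A = ∑ i, hA.eigenvalues i := by
  have h := hA.spectral_theorem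
  calc Matrix.trace A
      = Matrix.trace ((hA.eigenvectorUnitary : Matrix (Fin d) (Fin d) ℝ) *
        diagonal (RCLike.ofReal ∘ hA.eigenvalues) *
        (star (hA.eigenvectorUnitary : Matrix (Fin d) (Fin d) ℝ))) := by
          conv_lhs => rw [h, Unitary.conjStarAlgAut_apply]
    _ = Matrix.trace (diagonal (RCLike.ofReal ∘ hA.eigenvalues)) := by
        rw [Matrix.trace_mul_cycle,
          (Matrix.mem_unitaryGroup_iff').mp (hA.eigenvectorUnitary).2, one_mul]
    _ = ∑ i, hA.eigenvalues i := by simp [Matrix.trace_diagonal]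

/-- Trace AM–GM inequality for products of positive-definite matrices:
`tr(BC) ≥ d (det B · det C)^{1/d}`. -/
theorem trace_amgm_posdef (d : ℕ) (hd : 1 ≤ d)
    (B C : Matrix (Fin d) (Fin d) ℝ)
    (hB : B.PosDef) (hC : C.PosDef) :
    Matrix.trace (B * C) ≥ (d : ℝ) * (Matrix.det B * Matrix.det C) ^ ((1 : ℝ) / d) := by
  set S := (open scoped MatrixOrder in CFC.sqrt B) with hSdef
  have hSherm : S.IsHermitian := by
    open scoped MatrixOrder in exact (CFC.sqrt_nonneg B).posSemidef.1
  have hSS : S * S = B := by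
    open scoped MatrixOrder in exact CFC.sqrt_mul_sqrt_self B hB.posSemidef.nonneg
  have hdetS : S.det ≠ 0 := by
    intro h
    have hBd := hB.det_pos
    rw [← hSS, det_mul, h, mul_zero] at hBd
    exact lt_irrefl _ hBd
  -- M = S * C * S is positive definite
  have hM : (S * C * S).PosDef := by
    rw [Matrix.posDef_iff_dotProduct_mulVec]
    refine ⟨?_, ?_⟩
    · show (S * C * S)ᴴ = S * C * S
      rw [conjTranspose_mul, conjTranspose_mul, hSherm.eq, hC.1.eq, mul_assoc]
    · intro x hx
      have hx' : S *ᵥ x ≠ 0 := by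
        intro h
        apply hx
        have : S⁻¹ *ᵥ (S *ᵥ x) = x := by
          rw [mulVec_mulVec, Matrix.nonsing_inv_mul _ (isUnit_iff_ne_zero.mpr hdetS), one_mulVec]
        rw [h, mulVec_zero] at this
        exact this.symm
      have key : star x ⬝ᵥ (S * C * S) *ᵥ x
          = star (S *ᵥ x) ⬝ᵥ C *ᵥ (S *ᵥ x) := by
        rw [← mulVec_mulVec, ← mulVec_mulVec, dotProduct_mulVec,
          star_mulVec, hSherm.eq]
      rw [key]
      exact hC.dotProduct_mulVec_pos hx'
  have hMherm := hM.1
  have hev := hM.eigenvalues_pos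
  -- trace identity
  have htr : Matrix.trace (B * C) = Matrix.trace (S * C * S) := by
    rw [← hSS, mul_assoc, Matrix.trace_mul_comm, mul_assoc]
  -- det identity
  have hdet : Matrix.det (S * C * S) = Matrix.det B * Matrix.det C := by
    rw [det_mul, det_mul, ← hSS, det_mul]
    ring
  have hdetev : Matrix.det (S * C * S) = ∏ i, hMherm.eigenvalues i := by
    simpa using hMherm.det_eq_prod_eigenvalues
  have htrev : Matrix.trace (S * C * S) = ∑ i, hMherm.eigenvalues i :=
    trace_eq_sum_eigenvalues' hMherm
  have hd0 : (0:ℝ) < d := by exact_mod_cast hd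
  -- AM-GM
  have hamgm := Real.geom_mean_le_arith_mean_weighted Finset.univ
    (fun _ : Fin d => (1:ℝ)/d) hMherm.eigenvalues
    (fun i _ => by positivity)
    (by simp [Finset.sum_const, Finset.card_univ]; field_simp)
    (fun i _ => (hev i).le)
  have hprod : ∏ i : Fin d, hMherm.eigenvalues i ^ ((1:ℝ)/d)
      = (∏ i : Fin d, hMherm.eigenvalues i) ^ ((1:ℝ)/d) :=
    Real.finset_prod_rpow _ _ (fun i _ => (hev i).le) _
  rw [ge_iff_le, htr, htrev, ← hdet, hdetev, ← hprod]
  calc (d:ℝ) * ∏ i, hMherm.eigenvalues i ^ ((1:ℝ)/d)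
      ≤ (d:ℝ) * ∑ i, (1:ℝ)/d * hMherm.eigenvalues i :=
        mul_le_mul_of_nonneg_left hamgm hd0.le
    _ = ∑ i, hMherm.eigenvalues i := by
        rw [Finset.mul_sum]
        congr 1; ext i; field_simp
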